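/- Let m ≥ 3 be odd, n = 3^m - 1, δ₁ = (3^m - 1)/2, δ₂ = (3^{m-1} - 1)/4 + 3^{m-2}. Then δ₂ is the second largest absolute coset leader: for every s ∈ Z_n with C_s ∉ {C_{δ₁}, C_{δ₂}, C_{n-δ₂}}, the absolute coset leader of C_s is strictly less than δ₂. -/

import Mathlib

/-- The 3-cyclotomic coset of `s` modulo `n`. -/
def cyclotomicCoset (n s : ℕ) : Set ℕ := {k | ∃ j : ℕ, k = s * 3 ^ j % n}

/-- The absolute coset leader of the 3-cyclotomic coset of `s` modulo `n`. -/
noncomputable def absCosetLeader (n s : ℕ) : ℕ :=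
  sInf {t | ∃ k ∈ cyclotomicCoset n s, t = min k (n - k)}


/-- Value whose base-3 digits are `2,0,2,0,...,2` (v+1 twos). -/
def Epat : ℕ → ℕ
  | 0 => 2
  | v + 1 => 9 * Epat v + 2

/-- δ₂ for m = 2v+3 : base-3 digits `1,2,0,2,...,0,2`. -/
def Dpat : ℕ → ℕ
  | 0 => 5
  | v + 1 => 9 * Dpat v + 2

lemma Epat_eq (v : ℕ) : 4 * Epat v + 1 = 9 ^ (v + 1) := by
  induction v with
  | zero => simp [Epat]
  | succ v ih => rw [Epat]; ring_nf; ring_nf at ih; omega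

lemma Dpat_eq (v : ℕ) : Dpat v = Epat v + 3 ^ (2 * v + 1) := by
  induction v with
  | zero => simp [Epat, Dpat]
  | succ v ih =>
    rw [Epat, Dpat, ih]
    have : 3 ^ (2 * (v+1) + 1) = 9 * 3 ^ (2*v+1) := by ring
    omega

lemma twelve_Dpat (v : ℕ) : 12 * Dpat v + 3 = 7 * 9 ^ (v + 1) := by
  have h1 := Epat_eq v
  have h2 := Dpat_eq v
  have h3 : 9 ^ (v+1) = 3 * 3 ^ (2*v+1) := by
    have : 9 ^ (v+1) = 3 ^ (2*(v+1)) := by rw [pow_mul]; norm_num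
    rw [this]; ring
  omega

/-- bridge: δ₂ as in the theorem statement equals `Dpat v` when `m = 2v+3`. -/
lemma delta2_eq (v : ℕ) : (3 ^ (2*v + 2) - 1) / 4 + 3 ^ (2*v + 1) = Dpat v := by
  have h1 := Epat_eq v
  have h3 : 9 ^ (v+1) = 3 ^ (2*v+2) := by rw [show 2*v+2 = 2*(v+1) by ring, pow_mul]; norm_num
  have : (3 ^ (2*v+2) - 1) / 4 = Epat v := by omega
  rw [this, Dpat_eq]

-- toolbox

lemma div_pow_succ (x p : ℕ) : x / 3^p = 3 * (x / 3^(p+1)) + (x / 3^p % 3) := by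
  have h1 : x / 3^p / 3 = x / 3^(p+1) := by
    rw [Nat.div_div_eq_div_mul, pow_succ]
  have := Nat.div_add_mod (x / 3^p) 3
  omega

lemma agree_step (x y p : ℕ) (h1 : x / 3^(p+1) = y / 3^(p+1))
    (h2 : x / 3^p % 3 = y / 3^p % 3) : x / 3^p = y / 3^p := by
  rw [div_pow_succ x p, div_pow_succ y p, h1, h2]

lemma lt_of_digit_lt (x y p : ℕ) (h1 : x / 3^(p+1) = y / 3^(p+1))
    (h2 : x / 3^p % 3 < y / 3^p % 3) : x < y := by
  have hd : x / 3^p < y / 3^p := by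
    rw [div_pow_succ x p, div_pow_succ y p, h1]; omega
  by_contra hc
  have := Nat.div_le_div_right (c := 3^p) (le_of_not_gt hc)
  omega

lemma pow9 (c : ℕ) : (9:ℕ)^c = 3^(2*c) := by
  rw [show (9:ℕ) = 3^2 by norm_num, ← pow_mul]

lemma Dpat_mod3 (v : ℕ) : Dpat v % 3 = 2 := by
  induction v with
  | zero => simp [Dpat]
  | succ v ih => rw [Dpat]; omega

lemma Dpat_div_nine (v c : ℕ) (h : c ≤ v) : Dpat v / 9^c = Dpat (v - c) := by
  induction c with
  | zero => simp
  | succ c ih =>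
    have hc : c ≤ v := by omega
    have h9 : (9:ℕ)^(c+1) = 9^c * 9 := by ring
    rw [h9, ← Nat.div_div_eq_div_mul, ih hc]
    have hvc : v - c = (v - (c+1)) + 1 := by omega
    rw [hvc, Dpat]
    rw [Nat.mul_add_div (by norm_num)]
    simp

lemma Dpat_digit_even (v c : ℕ) (h : c ≤ v) : Dpat v / 3^(2*c) % 3 = 2 := by
  rw [← pow9, Dpat_div_nine v c h, Dpat_mod3]

lemma Dpat_div_odd (v c : ℕ) (h : c < v) : Dpat v / 3^(2*c+1) = 3 * Dpat (v - c - 1) := by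
  have h1 : (3:ℕ)^(2*c+1) = 9^c * 3 := by rw [pow9]; ring
  rw [h1, ← Nat.div_div_eq_div_mul, Dpat_div_nine v c (by omega)]
  have hvc : v - c = (v - c - 1) + 1 := by omega
  rw [hvc, Dpat]
  simp only [Nat.add_sub_cancel]
  omega

lemma Dpat_digit_odd (v c : ℕ) (h : c < v) : Dpat v / 3^(2*c+1) % 3 = 0 := by
  rw [Dpat_div_odd v c h]; omega

lemma Dpat_top (v : ℕ) : Dpat v / 3^(2*v) = 5 := by
  rw [← pow9, Dpat_div_nine v v le_rfl]; simp [Dpat]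

lemma Dpat_digit_ne_one (v p : ℕ) (h : p ≤ 2*v) : Dpat v / 3^p % 3 ≠ 1 := by
  rcases Nat.even_or_odd p with ⟨c, hc⟩ | ⟨c, hc⟩
  · rw [hc, show c + c = 2*c by ring, Dpat_digit_even v c (by omega)]; omega
  · rw [hc, Dpat_digit_odd v c (by omega)]; omega


lemma twelve_Dpat' (v : ℕ) : 12 * Dpat v + 3 = 7 * 3 ^ (2*v+2) := by
  have := twelve_Dpat v
  rw [show (9:ℕ)^(v+1) = 3^(2*v+2) by rw [pow9]; ring_nf] at this
  exact this

def W (v : ℕ) : ℕ := 3 ^ (2*v+2)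

structure Orbit (v : ℕ) (T : ℕ → ℕ) : Prop where
  lt : ∀ j, T j < 3 * W v - 1
  step : ∀ j, T (j+1) = 3 * (T j % W v) + T j / W v
  per : ∀ j, T (j + (2*v+3)) = T j
  lb : ∀ j, Dpat v ≤ T j
  ub : ∀ j, T j + Dpat v ≤ 3 * W v - 1

namespace Orbit

variable {v : ℕ} {T : ℕ → ℕ}

/-- leading digit -/
def A (v : ℕ) (T : ℕ → ℕ) (j : ℕ) : ℕ := T j / W v

lemma Wpos (v : ℕ) : 0 < W v := pow_pos (by norm_num) _

lemma Wge (v : ℕ) : 9 ≤ W v := by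
  have : (3:ℕ)^2 ≤ 3 ^ (2*v+2) := Nat.pow_le_pow_right (by norm_num) (by omega)
  simpa [W] using this

lemma decomp (j : ℕ) : T j = W v * (T j / W v) + T j % W v ∧ T j % W v < W v :=
  ⟨(Nat.div_add_mod (T j) (W v)).symm, Nat.mod_lt _ (Wpos v)⟩

lemma A_le_two (h : Orbit v T) (j : ℕ) : A v T j ≤ 2 := by
  have h1 := h.lt j
  have h2 : T j / W v ≤ (3 * W v - 1) / W v := Nat.div_le_div_right (by omega)
  have h3 : (3 * W v - 1) / W v ≤ 2 := by
    rw [Nat.div_le_iff_le_mul_add_pred (Wpos v)]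
    omega
  exact le_trans (by rw [A]) (le_trans h2 h3)

lemma F1 (h : Orbit v T) (j : ℕ) (h0 : A v T j = 0) : A v T (j+1) ≠ 0 := by
  intro hc
  unfold A at h0 hc
  have d0 := decomp (v := v) (T := T) j
  have d1 := decomp (v := v) (T := T) (j+1)
  rw [h0] at d0
  rw [hc] at d1
  have hr := h.step j
  rw [h0] at hr
  have hlb := h.lb j
  have h12 := twelve_Dpat' v
  have hW := Wge v
  rw [show (3:ℕ)^(2*v+2) = W v from rfl] at h12
  omega

lemma F2 (h : Orbit v T) (j : ℕ) (h0 : A v T j = 2) : A v T (j+1) ≠ 2 := by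
  intro hc
  unfold A at h0 hc
  have d0 := decomp (v := v) (T := T) j
  have d1 := decomp (v := v) (T := T) (j+1)
  rw [h0] at d0
  rw [hc] at d1
  have hr := h.step j
  rw [h0] at hr
  have hub := h.ub j
  have h12 := twelve_Dpat' v
  have hW := Wge v
  rw [show (3:ℕ)^(2*v+2) = W v from rfl] at h12
  omega

/-- digits of `T j` are the leading digits along the orbit -/
lemma digit (h : Orbit v T) (k : ℕ) (hk : k ≤ 2*v+2) (j : ℕ) :
    A v T (j + k) = T j / 3 ^ (2*v+2-k) % 3 := by
  induction k generalizing j with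
  | zero =>
    have h1 := A_le_two h j
    simp only [Nat.add_zero, Nat.sub_zero]
    rw [show (3:ℕ)^(2*v+2) = W v from rfl]
    unfold A at h1 ⊢
    exact (Nat.mod_eq_of_lt (by omega)).symm
  | succ k ih =>
    have hk' : k ≤ 2*v+2 := by omega
    have e1 : j + (k+1) = (j+1) + k := by omega
    rw [e1, ih hk' (j+1), h.step j]
    set q : ℕ := 2*v+1-k with hq
    have e2 : 2*v+2-k = q+1 := by omega
    have e3 : 2*v+2-(k+1) = q := by omega
    rw [e2, e3]
    have ha : T j / W v < 3 := by have := A_le_two h j; unfold A at this; omega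
    have e4 : (3 * (T j % W v) + T j / W v) / 3^(q+1) = (T j % W v) / 3^q := by
      rw [pow_succ', ← Nat.div_div_eq_div_mul]
      congr 1
      rw [Nat.add_comm, Nat.add_mul_div_left _ _ (by norm_num : (0:ℕ) < 3)]
      rw [Nat.div_eq_of_lt ha, Nat.zero_add]
    rw [e4]
    have e5 : T j = 3^q * (3^(2*v+2-q) * (T j / W v)) + T j % W v := by
      rw [← Nat.mul_assoc, ← pow_add, show q + (2*v+2-q) = 2*v+2 by omega]
      rw [show (3:ℕ)^(2*v+2) = W v from rfl]
      exact (Nat.div_add_mod (T j) (W v)).symm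
    have e6 : T j / 3^q = 3^(2*v+2-q) * (T j / W v) + (T j % W v) / 3^q := by
      conv_lhs => rw [e5]
      rw [Nat.mul_add_div (pow_pos (by norm_num) _)]
    rw [e6]
    have e7 : (3:ℕ)^(2*v+2-q) = 3 * 3^(2*v+1-q) := by
      rw [← pow_succ']
      congr 1
      omega
    rw [e7, Nat.mul_assoc, Nat.mul_add_mod]

lemma agree_above (x y b p : ℕ) (hb : b ≤ p) (hxy : x / 3^b = y / 3^b) :
    x / 3^p = y / 3^p := by
  rw [show p = b + (p - b) by omega, pow_add, ← Nat.div_div_eq_div_mul,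
    ← Nat.div_div_eq_div_mul, hxy]

lemma F3 (h : Orbit v T) (j : ℕ) (h0 : A v T j = 0) (h1 : A v T (j+1) = 1) :
    A v T (j+2) = 2 := by
  unfold A at h0 h1 ⊢
  have hTj : T j < W v := (Nat.div_eq_zero_iff.mp h0).resolve_left (Wpos v).ne'
  have hm0 : T j % W v = T j := Nat.mod_eq_of_lt hTj
  have s0 := h.step j
  rw [hm0, h0] at s0
  have d1 := decomp (v := v) (T := T) (j+1)
  rw [h1] at d1
  have s1 := h.step (j+1)
  rw [h1] at s1
  have hlb := h.lb j
  have h12 := twelve_Dpat' v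
  have hW := Wge v
  have hlt := h.lt (j+2)
  rw [show (3:ℕ)^(2*v+2) = W v from rfl] at h12
  rw [show j+2 = j+1+1 from rfl]
  exact Nat.div_eq_of_lt_le (by omega) (by omega)

/-- main inner induction for the `0,1,2,0,2,...` pattern -/
lemma next0_aux (h : Orbit v T) : ∀ d e j, e + d = v → A v T j = 0 → A v T (j+1) = 1 →
    T j / 3^(2*(v-e)) = Dpat v / 3^(2*(v-e)) →
    T j = Dpat v ∨ ∃ e', A v T (j+2+2*e') ≠ 1 ∧ A v T (j+3+2*e') = 1 ∧
      ∀ i, j+1 < i → i < j+3+2*e' → A v T i ≠ 1 := by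
  intro d
  induction d with
  | zero =>
    intro e j he h0 h1 hH
    left
    have : v - e = 0 := by omega
    rw [this] at hH
    simpa using hH
  | succ d ih =>
    intro e j he h0 h1 hH
    set c : ℕ := v - e - 1 with hc
    have hcv : c < v := by omega
    have hve : 2*(v-e) = 2*c+2 := by omega
    rw [hve] at hH
    have hpred : A v T (j+2+2*e) = 2 := by
      have hd := digit h (2+2*e) (by omega) j
      rw [show j + (2+2*e) = j+2+2*e by omega] at hd
      rw [hd, show 2*v+2-(2+2*e) = 2*c+2 by omega, hH,
        show (2:ℕ)*c+2 = 2*(c+1) by ring]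
      exact Dpat_digit_even v (c+1) (by omega)
    have hx := digit h (3+2*e) (by omega) j
    rw [show j + (3+2*e) = j+3+2*e by omega,
      show 2*v+2-(3+2*e) = 2*c+1 by omega] at hx
    have hxne2 : A v T (j+3+2*e) ≠ 2 := by
      have h2 := F2 h (j+2+2*e) hpred
      rw [show j+2+2*e+1 = j+3+2*e by omega] at h2
      exact h2
    have hxle := A_le_two h (j+3+2*e)
    rcases (by omega : A v T (j+3+2*e) = 1 ∨ A v T (j+3+2*e) = 0) with hx1 | hx0
    · right
      refine ⟨e, by rw [hpred]; omega, hx1, ?_⟩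
      intro i hi1 hi2
      obtain ⟨k, rfl, hk2, hk22⟩ : ∃ k, i = j + k ∧ 2 ≤ k ∧ k ≤ 2+2*e :=
        ⟨i - j, by omega, by omega, by omega⟩
      have hdk := digit h k (by omega) j
      have hagree : T j / 3^(2*v+2-k) = Dpat v / 3^(2*v+2-k) :=
        agree_above _ _ (2*c+2) _ (by omega) hH
      rw [hdk, hagree]
      exact Dpat_digit_ne_one v _ (by omega)
    · have e1 : (2:ℕ)*c+2 = (2*c+1)+1 := by omega
      rw [e1] at hH
      have hH1 : T j / 3^(2*c+1) = Dpat v / 3^(2*c+1) :=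
        agree_step _ _ _ hH (by rw [← hx, hx0, Dpat_digit_odd v c hcv])
      have hy := digit h (4+2*e) (by omega) j
      rw [show j + (4+2*e) = j+4+2*e by omega,
        show 2*v+2-(4+2*e) = 2*c by omega] at hy
      have hyne0 : A v T (j+4+2*e) ≠ 0 := by
        have h2 := F1 h (j+3+2*e) hx0
        rw [show j+3+2*e+1 = j+4+2*e by omega] at h2
        exact h2
      have hyle := A_le_two h (j+4+2*e)
      rcases (by omega : A v T (j+4+2*e) = 1 ∨ A v T (j+4+2*e) = 2) with hy1 | hy2
      · exfalso
        have hlt : T j < Dpat v :=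
          lt_of_digit_lt (T j) (Dpat v) (2*c) hH1
            (by rw [← hy, hy1, Dpat_digit_even v c (by omega)]; omega)
        have := h.lb j
        omega
      · have hH2 : T j / 3^(2*c) = Dpat v / 3^(2*c) :=
          agree_step _ _ _ hH1 (by rw [← hy, hy2, Dpat_digit_even v c (by omega)])
        exact ih (e+1) j (by omega) h0 h1
          (by rw [show 2*(v-(e+1)) = 2*c by omega]; exact hH2)

/-- If the pattern starts `0,1` then either `T j = δ₂` or there is a next `1`-position
at even distance with a non-`1` predecessor and no `1` in between. -/
lemma next0 (h : Orbit v T) (j : ℕ) (h0 : A v T j = 0) (h1 : A v T (j+1) = 1) :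
    T j = Dpat v ∨ ∃ e', A v T (j+2+2*e') ≠ 1 ∧ A v T (j+3+2*e') = 1 ∧
      ∀ i, j+1 < i → i < j+3+2*e' → A v T i ≠ 1 := by
  apply next0_aux h v 0 j (by omega) h0 h1
  rw [Nat.sub_zero, Dpat_top]
  have hd2 := F3 h j h0 h1
  have k1 := digit h 1 (by omega) j
  have k2 := digit h 2 (by omega) j
  rw [show 2*v+2-1 = 2*v+1 by omega] at k1
  rw [show 2*v+2-2 = 2*v by omega] at k2
  rw [k1] at h1
  rw [k2] at hd2
  have h0' := h0
  unfold A at h0'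
  rw [show W v = 3^(2*v+2) from rfl] at h0'
  have s1 := div_pow_succ (T j) (2*v+1)
  rw [show 2*v+1+1 = 2*v+2 by omega] at s1
  have s2 := div_pow_succ (T j) (2*v)
  omega

lemma Dpat_ge (v : ℕ) : 5 ≤ Dpat v := by
  have h12 := twelve_Dpat' v
  have hW := Wge v
  rw [show (3:ℕ)^(2*v+2) = W v from rfl] at h12
  omega

lemma dual_div (h : Orbit v T) (j : ℕ) :
    (3 * W v - 1 - T j) / W v = 2 - T j / W v ∧
    (3 * W v - 1 - T j) % W v = W v - 1 - T j % W v := by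
  have hd := decomp (v := v) (T := T) j
  have ha : T j / W v ≤ 2 := A_le_two h j
  have hlt := h.lt j
  have hlb := h.lb j
  have hD := Orbit.Dpat_ge v
  have hW := Wge v
  interval_cases hav : (T j / W v)
  · have e : 3 * W v - 1 - T j = W v * 2 + (W v - 1 - T j % W v) := by omega
    rw [e, Nat.mul_add_div (Wpos v), Nat.mul_add_mod,
      Nat.div_eq_of_lt (by omega), Nat.mod_eq_of_lt (by omega)]
    omega
  · have e : 3 * W v - 1 - T j = W v * 1 + (W v - 1 - T j % W v) := by omega
    rw [e, Nat.mul_add_div (Wpos v), Nat.mul_add_mod,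
      Nat.div_eq_of_lt (by omega), Nat.mod_eq_of_lt (by omega)]
    omega
  · have e : 3 * W v - 1 - T j = W v * 0 + (W v - 1 - T j % W v) := by omega
    rw [e, Nat.mul_add_div (Wpos v), Nat.mul_add_mod,
      Nat.div_eq_of_lt (by omega), Nat.mod_eq_of_lt (by omega)]
    omega

lemma dual (h : Orbit v T) : Orbit v (fun i => 3 * W v - 1 - T i) := by
  have hD := Orbit.Dpat_ge v
  have hW := Wge v
  constructor
  · intro j
    have := h.lb j
    omega
  · intro j
    obtain ⟨e1, e2⟩ := dual_div h j
    rw [e1, e2]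
    have hd := decomp (v := v) (T := T) j
    have ha : T j / W v ≤ 2 := A_le_two h j
    have hs := h.step j
    have hlt := h.lt j
    have hlt1 := h.lt (j+1)
    interval_cases hav : (T j / W v) <;> omega
  · intro j
    rw [h.per j]
  · intro j
    have := h.ub j
    have := h.lt j
    omega
  · intro j
    have := h.lb j
    have := h.lt j
    omega

lemma dual_A (h : Orbit v T) (j : ℕ) :
    A v (fun i => 3 * W v - 1 - T i) j = 2 - A v T j :=
  (dual_div h j).1

lemma chain (h : Orbit v T) (j : ℕ) (hne : A v T j ≠ 1) (h1 : A v T (j+1) = 1) :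
    (∃ i, T i = Dpat v ∨ T i + Dpat v = 3 * W v - 1) ∨
    ∃ e', A v T (j+2+2*e') ≠ 1 ∧ A v T (j+3+2*e') = 1 ∧
      ∀ i, j+1 < i → i < j+3+2*e' → A v T i ≠ 1 := by
  have ha := A_le_two h j
  rcases (by omega : A v T j = 0 ∨ A v T j = 2) with h0 | h2
  · rcases next0 h j h0 h1 with heq | hstep
    · exact Or.inl ⟨j, Or.inl heq⟩
    · exact Or.inr hstep
  · have hd := dual h
    have hA0 : A v (fun i => 3 * W v - 1 - T i) j = 0 := by rw [dual_A h, h2]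
    have hA1 : A v (fun i => 3 * W v - 1 - T i) (j+1) = 1 := by rw [dual_A h, h1]
    rcases next0 hd j hA0 hA1 with heq | ⟨e', p1, p2, p3⟩
    · left
      refine ⟨j, Or.inr ?_⟩
      have := h.lt j
      omega
    · right
      refine ⟨e', ?_, ?_, ?_⟩
      · rw [dual_A h] at p1
        have := A_le_two h (j+2+2*e')
        omega
      · rw [dual_A h] at p2
        have := A_le_two h (j+3+2*e')
        omega
      · intro i hi1 hi2
        have := p3 i hi1 hi2
        rw [dual_A h] at this
        have := A_le_two h i
        omega

lemma walk (h : Orbit v T) (fuel : ℕ) : ∀ j, A v T j ≠ 1 → A v T (j+1) = 1 →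
    fuel % 2 = 1 → A v T (j+1+fuel) = 1 → A v T (j+fuel) ≠ 1 →
    (∃ i, T i = Dpat v ∨ T i + Dpat v = 3 * W v - 1) := by
  induction fuel using Nat.strong_induction_on with
  | _ fuel ih =>
    intro j hj hj1 hodd hE hE1
    rcases chain h j hj hj1 with done | ⟨e', q1, q2, q3⟩
    · exact done
    · by_cases hq : j+3+2*e' < j+1+fuel
      · refine ih (fuel - (2+2*e')) (by omega) (j+2+2*e') q1 (by rw [show j+2+2*e'+1 = j+3+2*e' by omega]; exact q2) (by omega) ?_ ?_
        · rw [show j+2+2*e'+1+(fuel-(2+2*e')) = j+1+fuel by omega]; exact hE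
        · rw [show j+2+2*e'+(fuel-(2+2*e')) = j+fuel by omega]; exact hE1
      · rcases eq_or_lt_of_le (le_of_not_gt hq : j+1+fuel ≤ j+3+2*e') with heq | hlt
        · omega
        · exact absurd hE (q3 (j+1+fuel) (by omega) hlt)

lemma aper (h : Orbit v T) (i : ℕ) : A v T (i + (2*v+3)) = A v T i := by
  unfold A
  rw [h.per i]

lemma aper_mul (h : Orbit v T) (k : ℕ) : ∀ i, A v T (i + (2*v+3)*k) = A v T i := by
  induction k with
  | zero => simp
  | succ k ih =>
    intro i
    rw [show i + (2*v+3)*(k+1) = (i + (2*v+3)) + (2*v+3)*k by ring, ih, aper h]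

lemma core (h : Orbit v T) :
    (∃ i, T i = Dpat v ∨ T i + Dpat v = 3 * W v - 1) ∨ 2 * T 0 = 3 * W v - 1 := by
  by_cases hall : ∀ i, A v T i = 1
  · right
    set m : ℕ := 2*v+3 with hm
    have key : ∀ i, T (i+1) + 3 * W v = 3 * T i + 1 := by
      intro i
      have hd := decomp (v := v) (T := T) i
      have hai := hall i
      unfold A at hai
      rw [hai] at hd
      have hs := h.step i
      rw [hai] at hs
      omega
    have pow : ∀ k, 2*(T k : ℤ) - (3*(W v : ℤ) - 1) = 3^k * (2*(T 0 : ℤ) - (3*(W v : ℤ) - 1)) := by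
      intro k
      induction k with
      | zero => simp
      | succ k ih =>
        have := key k
        have hz : (T (k+1) : ℤ) + 3 * (W v : ℤ) = 3 * (T k : ℤ) + 1 := by exact_mod_cast this
        rw [pow_succ]
        have : 2*(T (k+1) : ℤ) - (3*(W v : ℤ) - 1) = 3 * (2*(T k : ℤ) - (3*(W v : ℤ) - 1)) := by linarith
        rw [this, ih]
        ring
    have hper : (T m : ℤ) = (T 0 : ℤ) := by
      have hp0 := h.per 0
      rw [Nat.zero_add] at hp0
      rw [hm, hp0]
    set X : ℤ := 2*(T 0 : ℤ) - (3*(W v : ℤ) - 1) with hX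
    have hXeq : X = 3^m * X := by
      have := pow m
      rw [hper] at this
      exact this
    have hmul : X * ((3:ℤ)^m - 1) = 0 := by linarith [hXeq]
    have h3m : (1:ℤ) < 3^m := by
      calc (1:ℤ) < 3 := by norm_num
      _ ≤ 3^m := le_self_pow₀ (by norm_num) (by omega)
    have hX0 : X = 0 := by
      rcases mul_eq_zero.mp hmul with h' | h'
      · exact h'
      · exfalso; omega
    have hW := Wge v
    have hlt := h.lt 0
    omega
  · push_neg at hall
    obtain ⟨j₀, hj₀⟩ := hall
    by_cases hex : ∃ i, A v T i = 1
    · obtain ⟨i₁, hi₁⟩ := hex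
      have hexists : ∃ p, A v T p = 1 ∧ j₀ < p := by
        refine ⟨i₁ + (2*v+3)*(j₀+1), ?_, ?_⟩
        · rw [aper_mul h]
          exact hi₁
        · nlinarith
      classical
      set q := Nat.find hexists with hqdef
      obtain ⟨hq1, hq2⟩ := Nat.find_spec hexists
      have hqpred : A v T (q-1) ≠ 1 := by
        rcases eq_or_lt_of_le (Nat.succ_le_of_lt hq2 : j₀ + 1 ≤ q) with he | hl
        · rw [show q - 1 = j₀ by omega]
          exact hj₀
        · intro hc
          exact Nat.find_min hexists (show q - 1 < q by omega) ⟨hc, by omega⟩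
      left
      have hq1' : A v T ((q-1)+1) = 1 := by rw [show q-1+1 = q by omega]; exact hq1
      refine walk h (2*v+3) (q-1) hqpred hq1' (by omega) ?_ ?_
      · rw [show q-1+1+(2*v+3) = q + (2*v+3) by omega, aper h]
        exact hq1
      · rw [aper h]
        exact hqpred
    · push_neg at hex
      exfalso
      have flip : ∀ i, A v T (i+1) = 2 - A v T i := by
        intro i
        have hai := A_le_two h i
        have hai1 := A_le_two h (i+1)
        have hne := hex i
        have hne1 := hex (i+1)
        rcases (by omega : A v T i = 0 ∨ A v T i = 2) with h0 | h2
        · have := F1 h i h0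
          omega
        · have := F2 h i h2
          omega
      have alt : ∀ k, A v T (j₀ + 2*k) = A v T j₀ := by
        intro k
        induction k with
        | zero => simp
        | succ k ih =>
          have f1 := flip (j₀ + 2*k)
          have f2 := flip (j₀ + 2*k + 1)
          have hbj := A_le_two h j₀
          rw [ih] at f1
          rw [show j₀ + 2*(k+1) = j₀ + 2*k + 1 + 1 by ring, f2, f1]
          omega
      have h1 := alt (v+1)
      have f := flip (j₀ + 2*(v+1))
      rw [h1] at f
      have hp := aper h j₀
      rw [show j₀ + (2*v+3) = j₀ + 2*(v+1) + 1 by ring] at hp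
      rw [f] at hp
      have := A_le_two h j₀
      have := hex j₀
      omega

end Orbit
section Glue

lemma coset_shift (m s k : ℕ) (hm : 1 ≤ m) (hk : k ∈ cyclotomicCoset (3^m-1) s) :
    cyclotomicCoset (3^m-1) s = cyclotomicCoset (3^m-1) k := by
  obtain ⟨j, hj⟩ := hk
  set n := 3^m - 1 with hn
  have h3 : 3 ≤ 3^m := by
    calc (3:ℕ) = 3^1 := by norm_num
    _ ≤ 3^m := Nat.pow_le_pow_right (by norm_num) hm
  have h3m : 3^m % n = 1 := by
    rw [show 3^m = 1 + n * 1 by omega, Nat.add_mul_mod_self_left]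
    exact Nat.mod_eq_of_lt (by omega)
  have key : ∀ x i, (x * 3^(m*i)) % n = x % n := by
    intro x i
    induction i with
    | zero => simp
    | succ i ih =>
      rw [Nat.mul_succ, pow_add, ← mul_assoc, Nat.mul_mod, h3m, mul_one,
        Nat.mod_mod_of_dvd _ dvd_rfl, ih]
  ext x
  constructor
  · rintro ⟨i, rfl⟩
    refine ⟨i + (m*(j+1) - j), ?_⟩
    rw [hj, Nat.mod_mul_mod, mul_assoc, ← pow_add,
      show j + (i + (m*(j+1) - j)) = i + m*(j+1) by have hle : j + 1 ≤ m*(j+1) := Nat.le_mul_of_pos_left (j+1) (by omega); omega,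
      pow_add, ← mul_assoc, key]
  · rintro ⟨i, rfl⟩
    refine ⟨j + i, ?_⟩
    rw [hj, Nat.mod_mul_mod, mul_assoc, ← pow_add]

theorem stmt5' (m : ℕ) (hm : 3 ≤ m) (hodd : Odd m) (s : ℕ) (hs : s < 3 ^ m - 1)
    (h1 : cyclotomicCoset (3 ^ m - 1) s ≠ cyclotomicCoset (3 ^ m - 1) ((3 ^ m - 1) / 2))
    (h2 : cyclotomicCoset (3 ^ m - 1) s ≠
      cyclotomicCoset (3 ^ m - 1) ((3 ^ (m - 1) - 1) / 4 + 3 ^ (m - 2)))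
    (h3 : cyclotomicCoset (3 ^ m - 1) s ≠
      cyclotomicCoset (3 ^ m - 1) ((3 ^ m - 1) - ((3 ^ (m - 1) - 1) / 4 + 3 ^ (m - 2)))) :
    absCosetLeader (3 ^ m - 1) s < (3 ^ (m - 1) - 1) / 4 + 3 ^ (m - 2) := by
  obtain ⟨v, rfl⟩ : ∃ v, m = 2*v+3 := by
    obtain ⟨t, ht⟩ := hodd
    exact ⟨t - 1, by omega⟩
  rw [show 2*v+3 - 1 = 2*v+2 by omega, show 2*v+3-2 = 2*v+1 by omega, delta2_eq v] at h2 h3 ⊢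
  set m : ℕ := 2*v+3 with hmdef
  set n : ℕ := 3^m - 1 with hn
  have hWn : n = 3 * W v - 1 := by
    rw [hn, show (3:ℕ)^m = 3 * 3^(2*v+2) from by rw [show m = (2*v+2)+1 by omega, pow_succ]; ring]
    rfl
  have hW := Orbit.Wge v
  have hD := Orbit.Dpat_ge v
  have h12 := twelve_Dpat' v
  rw [show (3:ℕ)^(2*v+2) = W v from rfl] at h12
  by_contra hcon
  push_neg at hcon
  -- the orbit
  set T : ℕ → ℕ := fun j => s * 3^j % n with hT
  have hnpos : 0 < n := by rw [hWn]; omega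
  have hlt : ∀ j, T j < n := fun j => Nat.mod_lt _ hnpos
  have hbounds : ∀ j, Dpat v ≤ T j ∧ T j + Dpat v ≤ n := by
    intro j
    have hmem : min (T j) (n - T j) ∈ {t | ∃ k ∈ cyclotomicCoset n s, t = min k (n - k)} :=
      ⟨T j, ⟨j, rfl⟩, rfl⟩
    have hinf := Nat.sInf_le hmem
    have : Dpat v ≤ min (T j) (n - T j) := le_trans hcon hinf
    have h1 := le_trans this (min_le_left _ _)
    have h2 := le_trans this (min_le_right _ _)
    have := hlt j
    omega
  have h3m : 3^m % n = 1 := by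
    have h3 : 3 ≤ 3^m := by
      calc (3:ℕ) = 3^1 := by norm_num
      _ ≤ 3^m := Nat.pow_le_pow_right (by norm_num) (by omega)
    rw [show 3^m = 1 + n * 1 by omega, Nat.add_mul_mod_self_left]
    exact Nat.mod_eq_of_lt (by omega)
  have horb : Orbit v T := by
    constructor
    · intro j; rw [← hWn]; exact hlt j
    · intro j
      have hstep1 : T (j+1) = (T j * 3) % n := by
        rw [hT]
        simp only
        rw [pow_succ, ← mul_assoc, ← Nat.mod_mul_mod]
      rw [hstep1]
      have hd : T j = W v * (T j / W v) + T j % W v := (Nat.div_add_mod _ _).symm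
      have hr : T j % W v < W v := Nat.mod_lt _ (Orbit.Wpos v)
      have ha : T j / W v ≤ 2 := by
        by_contra hc
        have : 3 * W v ≤ W v * (T j / W v) := by
          calc 3 * W v = W v * 3 := by ring
          _ ≤ W v * (T j / W v) := Nat.mul_le_mul_left _ (by omega)
        have := hlt j
        omega
      have hlj := hlt j
      interval_cases hav : (T j / W v)
      · rw [show T j * 3 = (3 * (T j % W v) + 0) + n * 0 by omega]
        rw [Nat.add_mul_mod_self_left]
        exact Nat.mod_eq_of_lt (by omega)
      · rw [show T j * 3 = (3 * (T j % W v) + 1) + n * 1 by omega]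
        rw [Nat.add_mul_mod_self_left]
        exact Nat.mod_eq_of_lt (by omega)
      · rw [show T j * 3 = (3 * (T j % W v) + 2) + n * 2 by omega]
        rw [Nat.add_mul_mod_self_left]
        exact Nat.mod_eq_of_lt (by omega)
    · intro j
      rw [hT]
      simp only
      rw [pow_add, ← mul_assoc, Nat.mul_mod, h3m, mul_one, Nat.mod_mod_of_dvd _ dvd_rfl]
    · exact fun j => (hbounds j).1
    · intro j
      rw [← hWn]
      exact (hbounds j).2
  rcases Orbit.core horb with ⟨i, hi | hi⟩ | hhalf
  · -- T i = δ₂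
    exact h2 (coset_shift m s (Dpat v) (by omega) ⟨i, hi.symm⟩)
  · -- T i = n - δ₂
    rw [← hWn] at hi
    have : T i = n - Dpat v := by omega
    exact h3 (coset_shift m s (n - Dpat v) (by omega) ⟨i, this.symm⟩)
  · -- all ones: s = n/2
    rw [← hWn] at hhalf
    have hT0 : T 0 = s := by
      rw [hT]
      simp only [pow_zero, mul_one]
      exact Nat.mod_eq_of_lt hs
    have hseq : s = n / 2 := by omega
    rw [show (3^m - 1)/2 = s by omega] at h1
    exact h1 rfl

end Glue

theorem stmt5 (m : ℕ) (hm : 3 ≤ m) (hodd : Odd m) (s : ℕ) (hs : s < 3 ^ m - 1)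
    (h1 : cyclotomicCoset (3 ^ m - 1) s ≠ cyclotomicCoset (3 ^ m - 1) ((3 ^ m - 1) / 2))
    (h2 : cyclotomicCoset (3 ^ m - 1) s ≠
      cyclotomicCoset (3 ^ m - 1) ((3 ^ (m - 1) - 1) / 4 + 3 ^ (m - 2)))
    (h3 : cyclotomicCoset (3 ^ m - 1) s ≠
      cyclotomicCoset (3 ^ m - 1) ((3 ^ m - 1) - ((3 ^ (m - 1) - 1) / 4 + 3 ^ (m - 2)))) :
    absCosetLeader (3 ^ m - 1) s < (3 ^ (m - 1) - 1) / 4 + 3 ^ (m - 2) :=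
  stmt5' m hm hodd s hs h1 h2 h3
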